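/- If only λ varies (μ' = 0, Σ' = 0) in Σ̃ = [[Σ + λ μ μ^T, λμ],[λμ^T, λ]], then tr(Σ̃' Σ̃^{-1} Σ̃' Σ̃^{-1}) = (λ'/λ)^2. -/

import Mathlib

open Matrix

/-- For the curve `t ↦ Σ̃(t) = [[Σ + λ(t) μ μᵀ, λ(t)μ], [λ(t)μᵀ, λ(t)]]` with `Σ`
and `μ` fixed and only `λ` varying, `tr(Σ̃' Σ̃⁻¹ Σ̃' Σ̃⁻¹) = (λ'/λ)²`
(the derivative `Σ̃'` is taken entrywise). -/
theorem block_metric_lambda_direction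
    (M : ℕ) (S : Matrix (Fin M) (Fin M) ℝ) (hS : S.PosDef)
    (μ : Fin M → ℝ)
    (l : ℝ → ℝ) (dl : ℝ) (t₀ : ℝ)
    (hlpos : 0 < l t₀)
    (hl : HasDerivAt l dl t₀)
    (St : ℝ → Matrix (Fin M ⊕ Fin 1) (Fin M ⊕ Fin 1) ℝ)
    (hSt : ∀ t, St t =
      Matrix.fromBlocks (S + l t • (Matrix.replicateCol (Fin 1) μ * Matrix.replicateRow (Fin 1) μ))
        (l t • Matrix.replicateCol (Fin 1) μ) (l t • Matrix.replicateRow (Fin 1) μ)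
        (l t • (1 : Matrix (Fin 1) (Fin 1) ℝ)))
    (D : Matrix (Fin M ⊕ Fin 1) (Fin M ⊕ Fin 1) ℝ)
    (hD : ∀ i j, HasDerivAt (fun t => St t i j) (D i j) t₀) :
    (D * (St t₀)⁻¹ * D * (St t₀)⁻¹).trace = (dl / l t₀) ^ 2 := by
  classical
  set l0 := l t₀ with hl0def
  have hl0 : l0 ≠ 0 := ne_of_gt hlpos
  set v : Fin M ⊕ Fin 1 → ℝ := Sum.elim μ (fun _ => 1) with hv
  -- Step 1: identify the derivative matrix D
  have hDeq : D = dl • (Matrix.replicateCol (Fin 1) v * Matrix.replicateRow (Fin 1) v) := by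
    ext i j
    have key : HasDerivAt (fun t => St t i j) (dl * (v i * v j)) t₀ := by
      have hfe : (fun t => St t i j) = fun t =>
          (Matrix.fromBlocks (S + l t • (Matrix.replicateCol (Fin 1) μ * Matrix.replicateRow (Fin 1) μ))
            (l t • Matrix.replicateCol (Fin 1) μ) (l t • Matrix.replicateRow (Fin 1) μ)
            (l t • (1 : Matrix (Fin 1) (Fin 1) ℝ))) i j := by
        funext t; rw [hSt t]
      rw [hfe]
      cases i with
      | inl i =>
        cases j with
        | inl j =>
          simp only [fromBlocks_apply₁₁, Matrix.add_apply, Matrix.smul_apply, smul_eq_mul, hv, Sum.elim_inl]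
          simpa using (hl.mul_const ((Matrix.replicateCol (Fin 1) μ * Matrix.replicateRow (Fin 1) μ) i j)).const_add
            (S i j) |>.congr_deriv (by
              simp [Matrix.mul_apply, Finset.sum_fin_eq_sum_range, mul_comm])
        | inr j =>
          simp only [fromBlocks_apply₁₂, Matrix.smul_apply, smul_eq_mul, hv, Sum.elim_inl, Sum.elim_inr]
          simpa [Matrix.replicateCol_apply, mul_comm] using hl.mul_const (μ i)
      | inr i =>
        cases j with
        | inl j =>
          simp only [fromBlocks_apply₂₁, Matrix.smul_apply, smul_eq_mul, hv, Sum.elim_inr, Sum.elim_inl]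
          simpa [Matrix.replicateRow_apply, mul_comm] using hl.mul_const (μ j)
        | inr j =>
          simp only [fromBlocks_apply₂₂, Matrix.smul_apply, smul_eq_mul, hv, Sum.elim_inr]
          simpa [Matrix.one_apply, Subsingleton.elim i j] using hl.mul_const
            ((1 : Matrix (Fin 1) (Fin 1) ℝ) i j)
    have := (hD i j).unique key
    simp [this, hv, Matrix.mul_apply, mul_comm]
  -- Step 2: the matrix at t₀ and its invertibility
  set A : Matrix (Fin M ⊕ Fin 1) (Fin M ⊕ Fin 1) ℝ :=
    Matrix.fromBlocks (S + l0 • (Matrix.replicateCol (Fin 1) μ * Matrix.replicateRow (Fin 1) μ))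
      (l0 • Matrix.replicateCol (Fin 1) μ) (l0 • Matrix.replicateRow (Fin 1) μ)
      (l0 • (1 : Matrix (Fin 1) (Fin 1) ℝ)) with hA
  have hSt0 : St t₀ = A := by rw [hSt t₀]
  haveI inst1 : Invertible (l0 • (1 : Matrix (Fin 1) (Fin 1) ℝ)) :=
    (Matrix.invertibleOfIsUnitDet _ (by simp [Matrix.det_smul, hl0]))
  have hinvOf : ⅟(l0 • (1 : Matrix (Fin 1) (Fin 1) ℝ)) = l0⁻¹ • 1 := by
    apply invOf_eq_right_inv
    rw [smul_mul_smul_comm, one_mul, mul_inv_cancel₀ hl0, one_smul]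
  have hdet : A.det ≠ 0 := by
    rw [hA, Matrix.det_fromBlocks₂₂, hinvOf]
    have hSchur : (S + l0 • (Matrix.replicateCol (Fin 1) μ * Matrix.replicateRow (Fin 1) μ)) -
        (l0 • Matrix.replicateCol (Fin 1) μ) * (l0⁻¹ • (1 : Matrix (Fin 1) (Fin 1) ℝ)) *
          (l0 • Matrix.replicateRow (Fin 1) μ) = S := by
      ext i j
      simp [Matrix.mul_apply, Matrix.replicateCol_apply, Matrix.replicateRow_apply, Matrix.one_apply,
        Fin.sum_univ_one, Matrix.smul_apply, smul_eq_mul]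
      field_simp
      ring
    rw [hSchur]
    simp only [Matrix.det_smul, hl0]
    simp [hl0, hS.det_pos.ne']
  have hinv : A⁻¹ * A = 1 := Matrix.nonsing_inv_mul A (by simpa using hdet)
  -- Step 3: A *ᵥ u = v with u = (0, l0⁻¹)
  set u : Fin M ⊕ Fin 1 → ℝ := Sum.elim 0 (fun _ => l0⁻¹) with hu
  have hAu : A *ᵥ u = v := by
    rw [hA, hu]
    funext i
    cases i with
    | inl i =>
      simp [Matrix.fromBlocks_mulVec, Matrix.mulVec, dotProduct, hv,
        Matrix.replicateCol_apply]
      field_simp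
    | inr i =>
      simp [Matrix.fromBlocks_mulVec, Matrix.mulVec, dotProduct, hv,
        Matrix.one_apply, Fin.eq_zero, mul_inv_cancel₀ hl0]
  have hXv : A⁻¹ *ᵥ v = u := by
    rw [← hAu, Matrix.mulVec_mulVec, hinv, Matrix.one_mulVec]
  -- Step 4: the 1×1 middle product
  have hw : Matrix.replicateRow (Fin 1) v * (A⁻¹ * Matrix.replicateCol (Fin 1) v)
      = Matrix.of (fun _ _ => l0⁻¹) := by
    rw [← Matrix.replicateCol_mulVec, hXv, Matrix.replicateRow_mul_replicateCol]
    congr 1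
    funext i j
    rw [hv, hu]
    simp [dotProduct, Fintype.sum_sum_type]
  -- Step 5: trace computation
  set C := Matrix.replicateCol (Fin 1) v with hC
  set R := Matrix.replicateRow (Fin 1) v with hR
  have hsmul : D * (St t₀)⁻¹ * D * (St t₀)⁻¹
      = (dl * dl) • (C * R * A⁻¹ * (C * R) * A⁻¹) := by
    rw [hSt0, hDeq]
    simp [Matrix.smul_mul, Matrix.mul_smul, smul_smul]
  rw [hsmul, Matrix.trace_smul]
  have hassoc1 : C * R * A⁻¹ * (C * R) * A⁻¹ = C * (R * A⁻¹ * (C * R) * A⁻¹) := by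
    simp [Matrix.mul_assoc]
  rw [hassoc1, Matrix.trace_mul_comm]
  have hassoc2 : (R * A⁻¹ * (C * R) * A⁻¹) * C
      = (R * (A⁻¹ * C)) * (R * (A⁻¹ * C)) := by
    simp [Matrix.mul_assoc]
  rw [hassoc2, hw]
  have : ((Matrix.of (fun _ _ => l0⁻¹) : Matrix (Fin 1) (Fin 1) ℝ) *
      Matrix.of (fun _ _ => l0⁻¹)).trace = l0⁻¹ * l0⁻¹ := by
    simp [Matrix.trace, Matrix.mul_apply, Fin.sum_univ_one, Matrix.diag]
  rw [this]
  field_simp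
  ring
  rw [← mul_pow, mul_inv_cancel₀ hl0]; ring
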